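/- arXiv:2501.07429 — 6 statements merged into one kernel-verified Lean document; each statement's English description precedes it below -/
import Mathlib

section
/- With π_k > 0, μ_k ∈ ℝⁿ, and Σ_k real symmetric positive definite n×n matrices for k = 1, …, K, and A, X, B the blocks of S(π, μ, Σ), the Schur complement B − XᵀA⁻¹X equals the K×K diagonal matrix diag(π_1/(1 + π_1 μ_1ᵀΣ_1⁻¹μ_1), …, π_K/(1 + π_K μ_KᵀΣ_K⁻¹μ_K)), and this matrix is positive definite. -/
open Matrix

/-- Block `A = blockdiag (Σₖ + πₖ μₖ μₖᵀ)ₖ` of the embedding. -/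
noncomputable def gmmA {n K : ℕ} (π : Fin K → ℝ) (μ : Fin K → Fin n → ℝ)
    (Sig : Fin K → Matrix (Fin n) (Fin n) ℝ) :
    Matrix (Fin n × Fin K) (Fin n × Fin K) ℝ :=
  Matrix.blockDiagonal fun k => Sig k + π k • Matrix.vecMulVec (μ k) (μ k)

/-- Block `X`: Kn×K block-diagonal matrix whose k-th diagonal block is the column `πₖ μₖ`. -/
noncomputable def gmmX {n K : ℕ} (π : Fin K → ℝ) (μ : Fin K → Fin n → ℝ) :
    Matrix (Fin n × Fin K) (Fin K) ℝ :=
  fun p l => if p.2 = l then π p.2 * μ p.2 p.1 else 0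

/-- Block `B = diag (π₁, …, π_K)`. -/
noncomputable def gmmB {K : ℕ} (π : Fin K → ℝ) : Matrix (Fin K) (Fin K) ℝ :=
  Matrix.diagonal π

/-- The embedding matrix `S(π, μ, Σ) = [[A, X], [Xᵀ, B]]`. -/
noncomputable def gmmS {n K : ℕ} (π : Fin K → ℝ) (μ : Fin K → Fin n → ℝ)
    (Sig : Fin K → Matrix (Fin n) (Fin n) ℝ) :
    Matrix (Fin n × Fin K ⊕ Fin K) (Fin n × Fin K ⊕ Fin K) ℝ :=
  Matrix.fromBlocks (gmmA π μ Sig) (gmmX π μ) (gmmX π μ)ᵀ (gmmB π)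

namespace GmmAux

lemma vecMulVec_mulVec' {n : ℕ} (v x : Fin n → ℝ) :
    (vecMulVec v v) *ᵥ x = (v ⬝ᵥ x) • v := by
  ext i; simp [mulVec, vecMulVec_apply, dotProduct, Finset.mul_sum, mul_comm, mul_left_comm]

lemma Ak_posDef {n : ℕ} (c : ℝ) (hc : 0 < c) (v : Fin n → ℝ)
    {S : Matrix (Fin n) (Fin n) ℝ} (hS : S.PosDef) :
    (S + c • vecMulVec v v).PosDef := by
  refine hS.add_posSemidef (.of_dotProduct_mulVec_nonneg ?_ fun x => ?_)
  · ext i j; simp [conjTranspose_apply, vecMulVec_apply, mul_comm]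
  · have hx : star x = x := by ext i; simp
    rw [hx, smul_mulVec, vecMulVec_mulVec', smul_smul, dotProduct_smul,
      smul_eq_mul, dotProduct_comm]
    nlinarith [mul_self_nonneg (x ⬝ᵥ v)]

lemma blockDiagonal_inv {n K : ℕ} (M : Fin K → Matrix (Fin n) (Fin n) ℝ)
    (h : ∀ k, IsUnit (M k).det) :
    (blockDiagonal M)⁻¹ = blockDiagonal (fun k => (M k)⁻¹) := by
  apply inv_eq_right_inv
  rw [← blockDiagonal_mul]
  have : (fun k => M k * (M k)⁻¹) = fun _ => (1 : Matrix (Fin n) (Fin n) ℝ) := by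
    funext k; exact mul_nonsing_inv _ (h k)
  rw [this]; exact blockDiagonal_one

/-- Sherman–Morrison style fact. -/
lemma inv_mulVec_mu {n : ℕ} (c : ℝ) (hc : 0 < c) (v : Fin n → ℝ)
    {S : Matrix (Fin n) (Fin n) ℝ} (hS : S.PosDef) :
    (S + c • vecMulVec v v)⁻¹ *ᵥ v = (1 + c * (v ⬝ᵥ S⁻¹ *ᵥ v))⁻¹ • (S⁻¹ *ᵥ v) := by
  set A := S + c • vecMulVec v v with hA
  have hApd := Ak_posDef c hc v hS
  set w := S⁻¹ *ᵥ v with hw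
  set d := 1 + c * (v ⬝ᵥ w) with hd
  have hS' : S *ᵥ w = v := by
    rw [hw, mulVec_mulVec, mul_nonsing_inv _ (isUnit_iff_isUnit_det S |>.mp hS.isUnit), one_mulVec]
  have hAw : A *ᵥ w = d • v := by
    rw [hA, add_mulVec, hS', smul_mulVec, vecMulVec_mulVec', hd]
    ext i; simp [mul_comm, mul_left_comm, add_mul]; ring
  have hd0 : 0 < d := by
    have : 0 ≤ v ⬝ᵥ w := by
      have := hS.inv.posSemidef.dotProduct_mulVec_nonneg v
      simpa using this
    nlinarith
  have hAinv : A⁻¹ *ᵥ (A *ᵥ w) = w := by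
    rw [mulVec_mulVec, nonsing_inv_mul _ (isUnit_iff_isUnit_det A |>.mp hApd.isUnit), one_mulVec]
  rw [hAw] at hAinv
  rw [mulVec_smul] at hAinv
  rw [← hAinv, smul_smul, inv_mul_cancel₀ hd0.ne', one_smul]

lemma X_quad {n K : ℕ} (π : Fin K → ℝ) (μ : Fin K → Fin n → ℝ)
    (N : Fin K → Matrix (Fin n) (Fin n) ℝ) :
    (gmmX π μ)ᵀ * blockDiagonal N * gmmX π μ =
      diagonal (fun k => π k * π k * (μ k ⬝ᵥ (N k *ᵥ μ k))) := by
  ext l l'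
  simp only [mul_apply, transpose_apply, gmmX, blockDiagonal_apply, diagonal_apply,
    Fintype.sum_prod_type, mulVec, dotProduct]
  simp [ite_and, mul_ite, ite_mul, Finset.sum_ite_eq, Finset.sum_ite_eq',
    Finset.mul_sum, Finset.sum_mul]
  rcases eq_or_ne l l' with h | h
  · subst h
    rw [if_pos rfl, if_pos rfl, Finset.sum_comm]
    exact Finset.sum_congr rfl fun i _ => Finset.sum_congr rfl fun j _ => by ring
  · simp [h, Ne.symm h]

end GmmAux

/-- The Schur complement `B − Xᵀ A⁻¹ X` equals the diagonal matrix
`diag (πₖ / (1 + πₖ μₖᵀΣₖ⁻¹μₖ))ₖ`, and it is positive definite. -/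
theorem gmm_schur_complement_B {n K : ℕ}
    (π : Fin K → ℝ) (μ : Fin K → Fin n → ℝ) (Sig : Fin K → Matrix (Fin n) (Fin n) ℝ)
    (hπ : ∀ k, 0 < π k) (hSig : ∀ k, (Sig k).PosDef) :
    gmmB π - (gmmX π μ)ᵀ * (gmmA π μ Sig)⁻¹ * gmmX π μ =
      Matrix.diagonal (fun k => π k / (1 + π k * (μ k ⬝ᵥ ((Sig k)⁻¹ *ᵥ μ k)))) ∧
    (gmmB π - (gmmX π μ)ᵀ * (gmmA π μ Sig)⁻¹ * gmmX π μ).PosDef := by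
  set Ak := fun k => Sig k + π k • Matrix.vecMulVec (μ k) (μ k) with hAk
  have hApd : ∀ k, (Ak k).PosDef := fun k => GmmAux.Ak_posDef (π k) (hπ k) (μ k) (hSig k)
  set c := fun k => μ k ⬝ᵥ (Sig k)⁻¹ *ᵥ μ k with hc
  have hc0 : ∀ k, 0 ≤ c k := fun k => by
    have := (hSig k).inv.posSemidef.dotProduct_mulVec_nonneg (μ k); simpa using this
  set d := fun k => 1 + π k * c k with hd
  have hd0 : ∀ k, 0 < d k := fun k => by
    have := hπ k; have := hc0 k; simp only [hd]; nlinarith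
  have hAinv : (gmmA π μ Sig)⁻¹ = Matrix.blockDiagonal (fun k => (Ak k)⁻¹) := by
    rw [gmmA]
    exact GmmAux.blockDiagonal_inv _ fun k =>
      (Matrix.isUnit_iff_isUnit_det _).mp (hApd k).isUnit
  have hmu : ∀ k, (Ak k)⁻¹ *ᵥ μ k = (d k)⁻¹ • ((Sig k)⁻¹ *ᵥ μ k) := fun k =>
    GmmAux.inv_mulVec_mu (π k) (hπ k) (μ k) (hSig k)
  have hmain : gmmB π - (gmmX π μ)ᵀ * (gmmA π μ Sig)⁻¹ * gmmX π μ =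
      Matrix.diagonal (fun k => π k / d k) := by
    rw [hAinv, GmmAux.X_quad, gmmB, Matrix.diagonal_sub]
    refine congrArg Matrix.diagonal (funext fun k => ?_)
    rw [hmu k]
    have hdk := (hd0 k).ne'
    simp only [dotProduct_smul, smul_eq_mul]
    field_simp
    rw [show μ k ⬝ᵥ (Sig k)⁻¹ *ᵥ μ k = c k from rfl, show d k = 1 + π k * c k from rfl]
    ring
  refine ⟨hmain, ?_⟩
  rw [hmain]
  exact Matrix.posDef_diagonal_iff.mpr fun k => div_pos (hπ k) (hd0 k)
end

section
/- With π_k > 0, μ_k ∈ ℝⁿ, and Σ_k real symmetric positive definite n×n matrices for k = 1, …, K, the matrix S = S(π, μ, Σ) is invertible and its inverse is the block matrix S⁻¹ = [[blockdiag(Σ_1⁻¹, …, Σ_K⁻¹), −Y],[−Yᵀ, diag(π_1⁻¹ + μ_1ᵀΣ_1⁻¹μ_1, …, π_K⁻¹ + μ_KᵀΣ_K⁻¹μ_K)]], where Y is the Kn×K block-diagonal matrix with k-th diagonal block the column vector Σ_k⁻¹μ_k. -/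
open Matrix

/-- `Y`: Kn×K block-diagonal matrix whose k-th diagonal block is the column `Σₖ⁻¹ μₖ`. -/
noncomputable def gmmY {n K : ℕ} (μ : Fin K → Fin n → ℝ)
    (Sig : Fin K → Matrix (Fin n) (Fin n) ℝ) :
    Matrix (Fin n × Fin K) (Fin K) ℝ :=
  fun p l => if p.2 = l then ((Sig p.2)⁻¹ *ᵥ μ p.2) p.1 else 0

/-- `S` is invertible with
`S⁻¹ = [[blockdiag (Σₖ⁻¹)ₖ, −Y], [−Yᵀ, diag (πₖ⁻¹ + μₖᵀΣₖ⁻¹μₖ)ₖ]]`. -/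
theorem gmmS_inv {n K : ℕ}
    (π : Fin K → ℝ) (μ : Fin K → Fin n → ℝ) (Sig : Fin K → Matrix (Fin n) (Fin n) ℝ)
    (hπ : ∀ k, 0 < π k) (hSig : ∀ k, (Sig k).PosDef) :
    IsUnit (gmmS π μ Sig) ∧
    (gmmS π μ Sig)⁻¹ =
      Matrix.fromBlocks (Matrix.blockDiagonal fun k => (Sig k)⁻¹) (-(gmmY μ Sig))
        (-(gmmY μ Sig))ᵀ
        (Matrix.diagonal fun k => (π k)⁻¹ + μ k ⬝ᵥ ((Sig k)⁻¹ *ᵥ μ k)) := by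
  have hinv : ∀ k, Sig k * (Sig k)⁻¹ = 1 := fun k =>
    Matrix.mul_nonsing_inv _ (hSig k).det_pos.ne'.isUnit
  have hsymm : ∀ k, ((Sig k)⁻¹)ᵀ = (Sig k)⁻¹ := fun k => by
    simpa using (hSig k).isHermitian.inv.eq
  have hπ' : ∀ k, π k ≠ 0 := fun k => (hπ k).ne'
  set N := Matrix.fromBlocks (Matrix.blockDiagonal fun k => (Sig k)⁻¹) (-(gmmY μ Sig))
      (-(gmmY μ Sig))ᵀ
      (Matrix.diagonal fun k => (π k)⁻¹ + μ k ⬝ᵥ ((Sig k)⁻¹ *ᵥ μ k)) with hN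
  have key : gmmS π μ Sig * N = 1 := by
    rw [gmmS, hN, Matrix.fromBlocks_multiply, ← Matrix.fromBlocks_one]
    rw [Matrix.fromBlocks_inj]
    refine ⟨?_, ?_, ?_, ?_⟩
    · -- block (1,1)
      ext ⟨i, k⟩ ⟨j, l⟩
      simp only [gmmA, gmmX, gmmY, Matrix.add_apply, Matrix.mul_apply,
        Matrix.blockDiagonal_apply, Matrix.transpose_apply, Matrix.neg_apply,
        Matrix.vecMulVec_apply, Matrix.smul_apply, smul_eq_mul, Fintype.sum_prod_type]
      simp only [ite_mul, mul_ite, zero_mul, mul_zero, neg_zero, mul_neg,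
        Finset.sum_ite_eq, Finset.sum_ite_eq', Finset.mem_univ, if_true]
      rcases eq_or_ne k l with rfl | hkl
      · have hs : ∀ a b, (Sig k)⁻¹ a b = (Sig k)⁻¹ b a := fun a b =>
          (congrFun (congrFun (hsymm k) a) b).symm
        have h2 : ((Sig k)⁻¹ *ᵥ μ k) j = ∑ x, μ k x * (Sig k)⁻¹ x j := by
          simp only [Matrix.mulVec, dotProduct]
          exact Finset.sum_congr rfl fun x _ => by rw [hs j x]; ring
        have h1 : ∑ x, Sig k i x * (Sig k)⁻¹ x j = (1 : Matrix (Fin n) (Fin n) ℝ) i j := by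
          rw [← Matrix.mul_apply, hinv k]
        simp only [if_pos rfl, Finset.sum_ite_eq, Finset.mem_univ, if_true, h2]
        rw [show (∑ x, (Sig k i x + π k * (μ k i * μ k x)) * (Sig k)⁻¹ x j)
            = (∑ x, Sig k i x * (Sig k)⁻¹ x j) + π k * μ k i * ∑ x, μ k x * (Sig k)⁻¹ x j from by
          rw [Finset.mul_sum, ← Finset.sum_add_distrib]; congr 1; ext x; ring]
        rw [h1]
        simp [Matrix.one_apply, Prod.ext_iff]
      · simp [hkl, Matrix.one_apply, Prod.ext_iff]
    · -- block (1,2)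
      ext ⟨i, k⟩ l
      simp only [gmmA, gmmX, gmmY, Matrix.add_apply, Matrix.mul_apply,
        Matrix.blockDiagonal_apply, Matrix.neg_apply, Matrix.vecMulVec_apply, Matrix.smul_apply,
        Matrix.diagonal_apply, smul_eq_mul, Fintype.sum_prod_type]
      simp only [ite_mul, mul_ite, zero_mul, mul_zero, neg_zero, mul_neg, neg_neg,
        Finset.sum_ite_eq, Finset.sum_ite_eq', Finset.mem_univ, if_true]
      rcases eq_or_ne k l with rfl | hkl
      · have hππ : π k * (π k)⁻¹ = 1 := mul_inv_cancel₀ (hπ' k)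
        have h1 : ∑ x, Sig k i x * ((Sig k)⁻¹ *ᵥ μ k) x = μ k i := by
          have h : Sig k *ᵥ ((Sig k)⁻¹ *ᵥ μ k) = μ k := by
            rw [Matrix.mulVec_mulVec, hinv, Matrix.one_mulVec]
          simpa [Matrix.mulVec, dotProduct] using congrFun h i
        simp only [if_pos rfl, Finset.sum_ite_eq, Finset.sum_ite_eq', Finset.mem_univ, if_true,
          Finset.sum_neg_distrib]
        rw [show (∑ x, (Sig k i x + π k * (μ k i * μ k x)) * ((Sig k)⁻¹ *ᵥ μ k) x)
            = (∑ x, Sig k i x * ((Sig k)⁻¹ *ᵥ μ k) x)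
              + π k * μ k i * ∑ x, μ k x * ((Sig k)⁻¹ *ᵥ μ k) x from by
          rw [Finset.mul_sum, ← Finset.sum_add_distrib]; congr 1; ext x; ring]
        rw [h1]
        have hd : μ k ⬝ᵥ ((Sig k)⁻¹ *ᵥ μ k) = ∑ x, μ k x * ((Sig k)⁻¹ *ᵥ μ k) x := rfl
        simp only [Matrix.zero_apply, ← hd]
        linear_combination μ k i * hππ
      · simp [hkl]
    · -- block (2,1)
      ext k ⟨j, l⟩
      simp only [gmmX, gmmY, gmmB, Matrix.add_apply, Matrix.mul_apply,
        Matrix.blockDiagonal_apply, Matrix.neg_apply, Matrix.transpose_apply,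
        Matrix.diagonal_apply, smul_eq_mul, Fintype.sum_prod_type]
      simp only [ite_mul, mul_ite, zero_mul, mul_zero, neg_zero, mul_neg, neg_neg,
        Finset.sum_ite_eq, Finset.sum_ite_eq', Finset.mem_univ, if_true]
      rcases eq_or_ne l k with rfl | hlk
      · have hs : ∀ a b, (Sig l)⁻¹ a b = (Sig l)⁻¹ b a := fun a b =>
          (congrFun (congrFun (hsymm l) a) b).symm
        have h2 : ((Sig l)⁻¹ *ᵥ μ l) j = ∑ x, μ l x * (Sig l)⁻¹ x j := by
          simp only [Matrix.mulVec, dotProduct]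
          exact Finset.sum_congr rfl fun x _ => by rw [hs j x]; ring
        simp only [if_pos rfl, Finset.sum_ite_eq, Finset.sum_ite_eq', Finset.mem_univ, if_true,
          Finset.sum_neg_distrib, Matrix.zero_apply, h2, Finset.mul_sum]
        rw [← sub_eq_add_neg, sub_eq_zero]
        exact Finset.sum_congr rfl fun x _ => by ring
      · simp only [Matrix.zero_apply]
        simp [hlk]
        exact fun h => absurd h.symm hlk
    · -- block (2,2)
      ext k l
      simp only [gmmX, gmmY, gmmB, Matrix.add_apply, Matrix.mul_apply,
        Matrix.blockDiagonal_apply, Matrix.neg_apply, Matrix.transpose_apply,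
        Matrix.diagonal_apply, smul_eq_mul, Fintype.sum_prod_type]
      simp only [ite_mul, mul_ite, zero_mul, mul_zero, neg_zero, mul_neg, neg_neg,
        Finset.sum_ite_eq, Finset.sum_ite_eq', Finset.mem_univ, if_true]
      rcases eq_or_ne k l with rfl | hkl
      · have hππ : π k * (π k)⁻¹ = 1 := mul_inv_cancel₀ (hπ' k)
        simp only [if_pos rfl, Finset.sum_ite_eq, Finset.sum_ite_eq', Finset.mem_univ, if_true,
          Finset.sum_neg_distrib, Matrix.one_apply_eq]
        have hd : μ k ⬝ᵥ ((Sig k)⁻¹ *ᵥ μ k) = ∑ x, μ k x * ((Sig k)⁻¹ *ᵥ μ k) x := rfl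
        rw [hd, show (∑ x, π k * μ k x * ((Sig k)⁻¹ *ᵥ μ k) x)
            = π k * ∑ x, μ k x * ((Sig k)⁻¹ *ᵥ μ k) x from by
          rw [Finset.mul_sum]; exact Finset.sum_congr rfl fun x _ => by ring]
        linear_combination hππ
      · simp [hkl, Matrix.one_apply]
        exact fun h => absurd h.symm hkl
  have key2 : N * gmmS π μ Sig = 1 := mul_eq_one_comm.mp key
  exact ⟨⟨⟨gmmS π μ Sig, N, key, key2⟩, rfl⟩, Matrix.inv_eq_right_inv key⟩
end

section
/- Fix π_k > 0, μ_k ∈ ℝⁿ, Σ_k real symmetric positive definite n×n matrices for k = 1, …, K, and perturbation data t_k ∈ ℝ, v_k ∈ ℝⁿ, and T_k real symmetric n×n matrices. Define dS = [[dA, dX],[dXᵀ, dB]] with dA = blockdiag(T_k + t_k μ_kμ_kᵀ + π_k v_kμ_kᵀ + π_k μ_kv_kᵀ)_{k=1}^K, dX the Kn×K block-diagonal matrix with k-th diagonal block the column vector t_k μ_k + π_k v_k, and dB = diag(t_1, …, t_K). Then S⁻¹ dS = [[C, D],[E, F]] where C = blockdiag(Σ_k⁻¹T_k + π_k Σ_k⁻¹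 v_k μ_kᵀ)_{k=1}^K, D is the Kn×K block-diagonal matrix with k-th block the column vector π_k Σ_k⁻¹ v_k, E is the K×Kn block-diagonal matrix with k-th block the row vector v_kᵀ + (t_k/π_k) μ_kᵀ − μ_kᵀΣ_k⁻¹T_k − π_k μ_kᵀΣ_k⁻¹v_k μ_kᵀ, and F = diag(t_k/π_k − π_k μ_kᵀΣ_k⁻¹v_k)_{k=1}^K. -/
open Matrix

/-- Block `dA = blockdiag (Tₖ + tₖ μₖμₖᵀ + πₖ vₖμₖᵀ + πₖ μₖvₖᵀ)ₖ`:
the differential of `A` in direction `(tₖ, vₖ, Tₖ)`. -/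
noncomputable def gmmdA {n K : ℕ} (π : Fin K → ℝ) (μ : Fin K → Fin n → ℝ)
    (t : Fin K → ℝ) (v : Fin K → Fin n → ℝ) (T : Fin K → Matrix (Fin n) (Fin n) ℝ) :
    Matrix (Fin n × Fin K) (Fin n × Fin K) ℝ :=
  Matrix.blockDiagonal fun k =>
    T k + t k • Matrix.vecMulVec (μ k) (μ k) + π k • Matrix.vecMulVec (v k) (μ k)
      + π k • Matrix.vecMulVec (μ k) (v k)

/-- Block `dX`: Kn×K block-diagonal matrix with k-th diagonal block the column
`tₖ μₖ + πₖ vₖ`. -/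
noncomputable def gmmdX {n K : ℕ} (π : Fin K → ℝ) (μ : Fin K → Fin n → ℝ)
    (t : Fin K → ℝ) (v : Fin K → Fin n → ℝ) :
    Matrix (Fin n × Fin K) (Fin K) ℝ :=
  fun p l => if p.2 = l then t p.2 * μ p.2 p.1 + π p.2 * v p.2 p.1 else 0

/-- The differential `dS = [[dA, dX], [dXᵀ, dB]]` of `S` in direction `(t, v, T)`,
with `dB = diag (t₁, …, t_K)`. -/
noncomputable def gmmdS {n K : ℕ} (π : Fin K → ℝ) (μ : Fin K → Fin n → ℝ)
    (t : Fin K → ℝ) (v : Fin K → Fin n → ℝ) (T : Fin K → Matrix (Fin n) (Fin n) ℝ) :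
    Matrix (Fin n × Fin K ⊕ Fin K) (Fin n × Fin K ⊕ Fin K) ℝ :=
  Matrix.fromBlocks (gmmdA π μ t v T) (gmmdX π μ t v) (gmmdX π μ t v)ᵀ
    (Matrix.diagonal t)

section gmmHelpers
variable {n K : ℕ}

def colBD (d : Fin K → Fin n → ℝ) : Matrix (Fin n × Fin K) (Fin K) ℝ :=
  fun p l => if p.2 = l then d p.2 p.1 else 0

def rowBD (d : Fin K → Fin n → ℝ) : Matrix (Fin K) (Fin n × Fin K) ℝ :=
  fun l p => if p.2 = l then d p.2 p.1 else 0

lemma transpose_colBD (d : Fin K → Fin n → ℝ) : (colBD d)ᵀ = rowBD d := rfl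

lemma bd_mul_colBD (M : Fin K → Matrix (Fin n) (Fin n) ℝ) (d : Fin K → Fin n → ℝ) :
    blockDiagonal M * colBD d = colBD (fun k => M k *ᵥ d k) := by
  ext ⟨i, k⟩ l
  simp [Matrix.mul_apply, colBD, blockDiagonal_apply, Fintype.sum_prod_type, mulVec, dotProduct,
    ite_mul, mul_ite, Finset.sum_ite_eq, Finset.sum_ite_eq']
  split_ifs with h <;> simp [h]

lemma rowBD_mul_bd (d : Fin K → Fin n → ℝ) (M : Fin K → Matrix (Fin n) (Fin n) ℝ) :
    rowBD d * blockDiagonal M = rowBD (fun k => d k ᵥ* M k) := by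
  ext l ⟨j, k⟩
  simp [Matrix.mul_apply, rowBD, blockDiagonal_apply, Fintype.sum_prod_type, vecMul, dotProduct,
    ite_mul, mul_ite, Finset.sum_ite_eq, Finset.sum_ite_eq']

lemma colBD_mul_rowBD (d e : Fin K → Fin n → ℝ) :
    colBD d * rowBD e = blockDiagonal (fun k => vecMulVec (d k) (e k)) := by
  ext ⟨i, k⟩ ⟨j, l⟩
  simp [Matrix.mul_apply, colBD, rowBD, blockDiagonal_apply, vecMulVec_apply,
    ite_mul, mul_ite, Finset.sum_ite_eq, Finset.sum_ite_eq']
  split_ifs with h1 h2 h2 <;> simp_all [h1]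

lemma rowBD_mul_colBD (d e : Fin K → Fin n → ℝ) :
    rowBD d * colBD e = diagonal (fun k => d k ⬝ᵥ e k) := by
  ext k l
  simp [Matrix.mul_apply, colBD, rowBD, diagonal_apply, dotProduct, Fintype.sum_prod_type,
    ite_mul, mul_ite, Finset.sum_ite_eq, Finset.sum_ite_eq']
  rcases eq_or_ne k l with h | h
  · subst h; simp
  · simp [h, Ne.symm h]

lemma diag_mul_rowBD (c : Fin K → ℝ) (d : Fin K → Fin n → ℝ) :
    diagonal c * rowBD d = rowBD (fun k => c k • d k) := by
  ext l ⟨j, k⟩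
  simp [diagonal_mul, rowBD]
  split_ifs with h <;> simp [h]

lemma colBD_mul_diag (d : Fin K → Fin n → ℝ) (c : Fin K → ℝ) :
    colBD d * diagonal c = colBD (fun k => c k • d k) := by
  ext ⟨i, k⟩ l
  simp [mul_diagonal, colBD]
  split_ifs with h <;> simp [h, mul_comm]

lemma colBD_add (d e : Fin K → Fin n → ℝ) :
    colBD d + colBD e = colBD (fun k => d k + e k) := by
  ext ⟨i, k⟩ l; simp [colBD]; split_ifs <;> simp

lemma rowBD_add (d e : Fin K → Fin n → ℝ) :
    rowBD d + rowBD e = rowBD (fun k => d k + e k) := by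
  ext l ⟨j, k⟩; simp [rowBD]; split_ifs <;> simp

lemma mul_vmv (M : Matrix (Fin n) (Fin n) ℝ) (a b : Fin n → ℝ) :
    M * vecMulVec a b = vecMulVec (M *ᵥ a) b := by
  ext i j
  simp [Matrix.mul_apply, vecMulVec_apply, mulVec, dotProduct, Finset.sum_mul, mul_assoc]

lemma vmv_mul (a b : Fin n → ℝ) (M : Matrix (Fin n) (Fin n) ℝ) :
    vecMulVec a b * M = vecMulVec a (b ᵥ* M) := by
  ext i j
  simp [Matrix.mul_apply, vecMulVec_apply, vecMul, dotProduct, Finset.mul_sum, mul_assoc]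

lemma vmv_mul_vmv (a b c d : Fin n → ℝ) :
    vecMulVec a b * vecMulVec c d = (b ⬝ᵥ c) • vecMulVec a d := by
  ext i j
  simp [Matrix.mul_apply, vecMulVec_apply, dotProduct, Finset.sum_mul, Finset.mul_sum]
  ring_nf
  exact Finset.sum_congr rfl fun m _ => by ring

lemma vmv_add (a b c : Fin n → ℝ) :
    vecMulVec a (b + c) = vecMulVec a b + vecMulVec a c := by
  ext i j; simp [vecMulVec_apply, mul_add]

lemma vmv_sub (a b c : Fin n → ℝ) :
    vecMulVec a (b - c) = vecMulVec a b - vecMulVec a c := by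
  ext i j; simp [vecMulVec_apply, mul_sub]

lemma vmv_smul (r : ℝ) (a b : Fin n → ℝ) :
    vecMulVec a (r • b) = r • vecMulVec a b := by
  ext i j; simp [vecMulVec_apply]; ring

lemma smul_vmv (r : ℝ) (a b : Fin n → ℝ) :
    vecMulVec (r • a) b = r • vecMulVec a b := by
  ext i j; simp [vecMulVec_apply]; ring

lemma vecMul_vmv (a c d : Fin n → ℝ) : a ᵥ* vecMulVec c d = (a ⬝ᵥ c) • d := by
  ext j; simp [vecMul, vecMulVec_apply, dotProduct, Finset.sum_mul, mul_assoc]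

lemma vmv_mulVec (a b x : Fin n → ℝ) : vecMulVec a b *ᵥ x = (b ⬝ᵥ x) • a := by
  ext i
  simp only [mulVec, vecMulVec_apply, dotProduct, Pi.smul_apply, smul_eq_mul, Finset.sum_mul]
  exact Finset.sum_congr rfl fun m _ => by ring

section perk
variable (S T : Matrix (Fin n) (Fin n) ℝ) (μ v : Fin n → ℝ) (p t : ℝ)
  (hp : p ≠ 0) (hS : IsUnit S.det)

lemma key1 (hp : p ≠ 0) (hS : IsUnit S.det) :
    (S + p • vecMulVec μ μ) * (S⁻¹ * T + p • vecMulVec (S⁻¹ *ᵥ v) μ)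
      + vecMulVec (p • μ) (v + (t / p) • μ - μ ᵥ* (S⁻¹ * T) - (p * (μ ⬝ᵥ (S⁻¹ *ᵥ v))) • μ)
    = T + t • vecMulVec μ μ + p • vecMulVec v μ + p • vecMulVec μ v := by
  have h1 : S * (S⁻¹ * T) = T := Matrix.mul_nonsing_inv_cancel_left S T hS
  have h2 : S *ᵥ (S⁻¹ *ᵥ v) = v := by
    rw [Matrix.mulVec_mulVec, Matrix.mul_nonsing_inv _ hS, Matrix.one_mulVec]
  obtain ⟨s, rfl⟩ : ∃ s, t = p * s := ⟨t / p, (mul_div_cancel₀ t hp).symm⟩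
  rw [mul_div_cancel_left₀ _ hp]
  simp only [Matrix.add_mul, Matrix.mul_add, Matrix.mul_smul, Matrix.smul_mul,
    smul_vmv, vmv_add, vmv_sub, vmv_smul, mul_vmv, vmv_mul, vmv_mul_vmv, vmv_mulVec, smul_smul, h1, h2]
  match_scalars <;> ring

lemma key2 (hp : p ≠ 0) (hS : IsUnit S.det) :
    (S + p • vecMulVec μ μ) *ᵥ (p • (S⁻¹ *ᵥ v))
      + (t / p - p * (μ ⬝ᵥ (S⁻¹ *ᵥ v))) • (p • μ)
    = t • μ + p • v := by
  have h2 : S *ᵥ (S⁻¹ *ᵥ v) = v := by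
    rw [Matrix.mulVec_mulVec, Matrix.mul_nonsing_inv _ hS, Matrix.one_mulVec]
  simp only [Matrix.add_mulVec, Matrix.mulVec_smul, Matrix.smul_mulVec,
    vmv_mulVec, h2]
  obtain ⟨s, rfl⟩ : ∃ s, t = p * s := ⟨t / p, (mul_div_cancel₀ t hp).symm⟩
  rw [mul_div_cancel_left₀ _ hp]
  match_scalars <;> ring

lemma vecMul_smulM (a : Fin n → ℝ) (r : ℝ) (M : Matrix (Fin n) (Fin n) ℝ) :
    a ᵥ* (r • M) = r • (a ᵥ* M) := by
  ext j; simp [vecMul, dotProduct, Finset.mul_sum]; exact Finset.sum_congr rfl fun m _ => by ring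

lemma key3 (hp : p ≠ 0) :
    (p • μ) ᵥ* (S⁻¹ * T + p • vecMulVec (S⁻¹ *ᵥ v) μ)
      + p • (v + (t / p) • μ - μ ᵥ* (S⁻¹ * T) - (p * (μ ⬝ᵥ (S⁻¹ *ᵥ v))) • μ)
    = t • μ + p • v := by
  obtain ⟨s, rfl⟩ : ∃ s, t = p * s := ⟨t / p, (mul_div_cancel₀ t hp).symm⟩
  rw [mul_div_cancel_left₀ _ hp]
  simp only [Matrix.vecMul_add, Matrix.smul_vecMul, vecMul_smulM, vecMul_vmv]
  match_scalars <;> ring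

lemma key4 (hp : p ≠ 0) :
    (p • μ) ⬝ᵥ (p • (S⁻¹ *ᵥ v)) + p * (t / p - p * (μ ⬝ᵥ (S⁻¹ *ᵥ v))) = t := by
  obtain ⟨s, rfl⟩ : ∃ s, t = p * s := ⟨t / p, (mul_div_cancel₀ t hp).symm⟩
  rw [mul_div_cancel_left₀ _ hp]
  simp only [dotProduct_smul, smul_dotProduct, smul_eq_mul]
  ring

end perk

end gmmHelpers

/-- `S⁻¹ dS = [[C, D], [E, F]]` with the blocks as computed in the paper. -/
theorem gmmS_inv_mul_dS {n K : ℕ}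
    (π : Fin K → ℝ) (μ : Fin K → Fin n → ℝ) (Sig : Fin K → Matrix (Fin n) (Fin n) ℝ)
    (t : Fin K → ℝ) (v : Fin K → Fin n → ℝ) (T : Fin K → Matrix (Fin n) (Fin n) ℝ)
    (hπ : ∀ k, 0 < π k) (hSig : ∀ k, (Sig k).PosDef) (hT : ∀ k, (T k).IsSymm) :
    (gmmS π μ Sig)⁻¹ * gmmdS π μ t v T =
      Matrix.fromBlocks
        (Matrix.blockDiagonal fun k =>
          (Sig k)⁻¹ * T k + π k • Matrix.vecMulVec ((Sig k)⁻¹ *ᵥ v k) (μ k))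
        (fun p l => if p.2 = l then π p.2 * ((Sig p.2)⁻¹ *ᵥ v p.2) p.1 else 0)
        (fun l p => if p.2 = l then
            v l p.1 + (t l / π l) * μ l p.1 - (μ l ᵥ* ((Sig l)⁻¹ * T l)) p.1
              - π l * (μ l ⬝ᵥ ((Sig l)⁻¹ *ᵥ v l)) * μ l p.1
          else 0)
        (Matrix.diagonal fun k => t k / π k - π k * (μ k ⬝ᵥ ((Sig k)⁻¹ *ᵥ v k))) := by
  
  have hπ' : ∀ k, π k ≠ 0 := fun k => (hπ k).ne'
  have hdet : ∀ k, IsUnit (Sig k).det := fun k =>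
    isUnit_iff_ne_zero.mpr (hSig k).det_pos.ne'
  -- block forms
  have hX : gmmX π μ = colBD (fun k => π k • μ k) := by
    ext ⟨i, k⟩ l; simp only [gmmX, colBD, Pi.smul_apply, smul_eq_mul]
  have hdX : gmmdX π μ t v = colBD (fun k => t k • μ k + π k • v k) := by
    ext ⟨i, k⟩ l; simp only [gmmdX, colBD, Pi.add_apply, Pi.smul_apply, smul_eq_mul]
  have hD : (fun p l => if p.2 = l then π p.2 * ((Sig p.2)⁻¹ *ᵥ v p.2) p.1 else 0 :
      Matrix (Fin n × Fin K) (Fin K) ℝ)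
      = colBD (fun k => π k • ((Sig k)⁻¹ *ᵥ v k)) := by
    ext ⟨i, k⟩ l; simp only [colBD, Pi.smul_apply, smul_eq_mul]
  have hE : (fun l p => if p.2 = l then
        v l p.1 + (t l / π l) * μ l p.1 - (μ l ᵥ* ((Sig l)⁻¹ * T l)) p.1
          - π l * (μ l ⬝ᵥ ((Sig l)⁻¹ *ᵥ v l)) * μ l p.1 else 0 :
      Matrix (Fin K) (Fin n × Fin K) ℝ)
      = rowBD (fun k => v k + (t k / π k) • μ k - μ k ᵥ* ((Sig k)⁻¹ * T k)
          - (π k * (μ k ⬝ᵥ ((Sig k)⁻¹ *ᵥ v k))) • μ k) := by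
    ext l ⟨j, k⟩
    simp only [rowBD, Pi.sub_apply, Pi.add_apply, Pi.smul_apply, smul_eq_mul]
    split_ifs with h
    · subst h; ring
    · rfl
  -- invertibility of S
  letI : Invertible π :=
    ⟨fun k => (π k)⁻¹, by funext k; exact inv_mul_cancel₀ (hπ' k),
      by funext k; exact mul_inv_cancel₀ (hπ' k)⟩
  letI : Invertible (gmmB π) := Matrix.diagonalInvertible π
  have hBinv : ⅟(gmmB π) = Matrix.diagonal (fun k => (π k)⁻¹) := by
    refine invOf_eq_right_inv ?_
    show Matrix.diagonal π * Matrix.diagonal _ = 1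
    rw [Matrix.diagonal_mul_diagonal]
    convert Matrix.diagonal_one with k
    exact mul_inv_cancel₀ (hπ' k)
  have hSchur : gmmA π μ Sig - gmmX π μ * ⅟(gmmB π) * (gmmX π μ)ᵀ
      = Matrix.blockDiagonal Sig := by
    rw [hX, hBinv, transpose_colBD, colBD_mul_diag, colBD_mul_rowBD]
    unfold gmmA
    rw [← Matrix.blockDiagonal_sub]
    refine congrArg Matrix.blockDiagonal (funext fun k => ?_)
    simp only [Pi.sub_apply]
    rw [smul_smul, inv_mul_cancel₀ (hπ' k), one_smul, vmv_smul]
    exact add_sub_cancel_right _ _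
  letI : Invertible (Matrix.blockDiagonal Sig) :=
    Matrix.invertibleOfIsUnitDet _ (by
      rw [Matrix.det_blockDiagonal]
      exact isUnit_iff_ne_zero.mpr
        (Finset.prod_ne_zero_iff.mpr fun k _ => (hSig k).det_pos.ne'))
  letI : Invertible (gmmA π μ Sig - gmmX π μ * ⅟(gmmB π) * (gmmX π μ)ᵀ) := by
    rw [hSchur]; infer_instance
  letI : Invertible (gmmS π μ Sig) := by
    unfold gmmS; exact Matrix.fromBlocks₂₂Invertible _ _ _ _
  -- the main product identity
  suffices h : gmmS π μ Sig *
      Matrix.fromBlocks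
        (Matrix.blockDiagonal fun k =>
          (Sig k)⁻¹ * T k + π k • Matrix.vecMulVec ((Sig k)⁻¹ *ᵥ v k) (μ k))
        (fun p l => if p.2 = l then π p.2 * ((Sig p.2)⁻¹ *ᵥ v p.2) p.1 else 0)
        (fun l p => if p.2 = l then
            v l p.1 + (t l / π l) * μ l p.1 - (μ l ᵥ* ((Sig l)⁻¹ * T l)) p.1
              - π l * (μ l ⬝ᵥ ((Sig l)⁻¹ *ᵥ v l)) * μ l p.1
          else 0)
        (Matrix.diagonal fun k => t k / π k - π k * (μ k ⬝ᵥ ((Sig k)⁻¹ *ᵥ v k)))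
      = gmmdS π μ t v T by
    rw [← h, ← Matrix.mul_assoc,
      Matrix.nonsing_inv_mul _ (Matrix.isUnit_det_of_invertible _), Matrix.one_mul]
  rw [hD, hE]
  unfold gmmS gmmdS gmmA gmmdA gmmB
  rw [hX, hdX, transpose_colBD, transpose_colBD, Matrix.fromBlocks_multiply]
  refine Matrix.fromBlocks_inj.mpr ⟨?_, ?_, ?_, ?_⟩
  · rw [← Matrix.blockDiagonal_mul, colBD_mul_rowBD, ← Matrix.blockDiagonal_add]
    exact congrArg Matrix.blockDiagonal (funext fun k =>
      key1 (Sig k) (T k) (μ k) (v k) (π k) (t k) (hπ' k) (hdet k))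
  · rw [bd_mul_colBD, colBD_mul_diag, colBD_add]
    exact congrArg colBD (funext fun k =>
      key2 (Sig k) (μ k) (v k) (π k) (t k) (hπ' k) (hdet k))
  · rw [rowBD_mul_bd, diag_mul_rowBD, rowBD_add]
    exact congrArg rowBD (funext fun k =>
      key3 (Sig k) (T k) (μ k) (v k) (π k) (t k) (hπ' k))
  · rw [rowBD_mul_colBD, Matrix.diagonal_mul_diagonal, Matrix.diagonal_add]
    exact congrArg Matrix.diagonal (funext fun k =>
      key4 (Sig k) (μ k) (v k) (π k) (t k) (hπ' k))
end

section
/- Fix π_k > 0, μ_k ∈ ℝⁿ, Σ_k real symmetric positive definite n×n matrices for k = 1, …, K, and perturbation data t_k ∈ ℝ, v_k ∈ ℝⁿ, and T_k real symmetric n×n matrices. With dS defined as the block matrix [[dA, dX],[dXᵀ, dB]], dA = blockdiag(T_k + t_k μ_kμ_kᵀ + π_k v_kμ_kᵀ + π_k μ_kv_kᵀ), dX the Kn×K block-diagonal matrix with k-th block the column vector t_k μ_k + π_k v_k, dB = diag(t_1, …, t_K), one has (1/2)·Tr((S⁻¹ dS)²) = Σ_{k=1}^{K} [ (1/2)(t_k/π_k)²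 + π_k v_kᵀΣ_k⁻¹v_k + (1/2)·Tr((Σ_k⁻¹ T_k)²) ]. -/
set_option linter.unusedSectionVars false
set_option maxHeartbeats 1000000
open Matrix

section Helpers


variable {m : Type*} [Fintype m] [DecidableEq m]

lemma vecMulVec_mulVec' (a b x : m → ℝ) :
    vecMulVec a b *ᵥ x = (b ⬝ᵥ x) • a := by
  ext i
  simp only [mulVec, vecMulVec_apply, dotProduct, Pi.smul_apply, smul_eq_mul, Finset.sum_mul]
  exact Finset.sum_congr rfl fun j _ => by ring

lemma mul_vecMulVec' (M : Matrix m m ℝ) (a b : m → ℝ) :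
    M * vecMulVec a b = vecMulVec (M *ᵥ a) b := by
  ext i j
  simp only [mul_apply, vecMulVec_apply, mulVec, dotProduct, Finset.sum_mul]
  exact Finset.sum_congr rfl fun l _ => by ring

lemma vecMulVec_mul' (M : Matrix m m ℝ) (a b : m → ℝ) :
    vecMulVec a b * M = vecMulVec a (Mᵀ *ᵥ b) := by
  ext i j
  simp [mul_apply, vecMulVec_apply, mulVec, dotProduct, Finset.mul_sum, mul_comm, mul_assoc,
    mul_left_comm]

lemma trace_vecMulVec' (a b : m → ℝ) : trace (vecMulVec a b) = a ⬝ᵥ b := by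
  simp [trace, vecMulVec_apply, dotProduct, diag]

lemma smul_vecMulVec (c : ℝ) (a b : m → ℝ) : vecMulVec (c • a) b = c • vecMulVec a b := by
  ext i j; simp [vecMulVec_apply, mul_assoc]

lemma vecMulVec_smul (c : ℝ) (a b : m → ℝ) : vecMulVec a (c • b) = c • vecMulVec a b := by
  ext i j; simp [vecMulVec_apply]; ring

lemma neg_vecMulVec (a b : m → ℝ) : vecMulVec (-a) b = -vecMulVec a b := by
  ext i j; simp [vecMulVec_apply]

lemma dot_mulVec_symm {M : Matrix m m ℝ} (h : Mᵀ = M) (a b : m → ℝ) :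
    (M *ᵥ a) ⬝ᵥ b = a ⬝ᵥ (M *ᵥ b) := by
  rw [dotProduct_mulVec, ← h, vecMul_transpose, dotProduct_comm, h, dotProduct_comm]

lemma trace_fromBlocks' {p : Type*} [Fintype p] (A : Matrix m m ℝ) (B : Matrix m p ℝ)
    (C : Matrix p m ℝ) (D : Matrix p p ℝ) :
    trace (fromBlocks A B C D) = trace A + trace D := by
  simp [trace, Fintype.sum_sum_type, fromBlocks, diag]

lemma vecMulVec_add (a b c : m → ℝ) :
    vecMulVec a (b + c) = vecMulVec a b + vecMulVec a c := by
  ext i j; simp [vecMulVec_apply]; ring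

lemma vecMulVec_neg (a b : m → ℝ) : vecMulVec a (-b) = -vecMulVec a b := by
  ext i j; simp [vecMulVec_apply]

lemma vecMulVec_transpose' (a b : m → ℝ) : (vecMulVec a b)ᵀ = vecMulVec b a := by
  ext i j; simp [vecMulVec_apply]; ring

section Key
variable {n : ℕ}

lemma key_component (P T : Matrix (Fin n) (Fin n) ℝ) (μ v : Fin n → ℝ) (π t : ℝ)
    (hπ : π ≠ 0) (hP : Pᵀ = P) (hT : Tᵀ = T) :
    let dA := T + t • vecMulVec μ μ + π • vecMulVec v μ + π • vecMulVec μ v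
    let c := t • μ + π • v
    let b := π⁻¹ + μ ⬝ᵥ (P *ᵥ μ)
    let g := -(P *ᵥ μ)
    (1 / 2) * (trace ((P * dA + vecMulVec g c) * (P * dA + vecMulVec g c))
        + (P *ᵥ c + t • g) ⬝ᵥ (dAᵀ *ᵥ g + b • c)
        + (dAᵀ *ᵥ g + b • c) ⬝ᵥ (P *ᵥ c + t • g)
        + (g ⬝ᵥ c + b * t) ^ 2)
      = (1 / 2) * (t / π) ^ 2 + π * (v ⬝ᵥ (P *ᵥ v))
        + (1 / 2) * trace ((P * T) * (P * T)) := by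
  intro dA c b g
  set e := μ ⬝ᵥ (P *ᵥ v) with he
  have h1 : P * dA + vecMulVec g c = P * T + π • vecMulVec (P *ᵥ v) μ := by
    simp only [dA, c, g, mul_add, mul_smul_comm, mul_vecMulVec', _root_.neg_vecMulVec,
      _root_.vecMulVec_add, _root_.vecMulVec_smul, smul_smul]
    module
  have h2 : P *ᵥ c + t • g = π • (P *ᵥ v) := by
    simp only [c, g, mulVec_add, mulVec_smul, smul_neg]
    abel
  have h4 : g ⬝ᵥ c + b * t = t / π - π * e := by
    simp only [g, c, b, neg_dotProduct, dotProduct_add, dotProduct_smul, smul_eq_mul]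
    have hμ : (P *ᵥ μ) ⬝ᵥ μ = μ ⬝ᵥ (P *ᵥ μ) := dot_mulVec_symm hP μ μ
    have hv : (P *ᵥ μ) ⬝ᵥ v = e := dot_mulVec_symm hP μ v
    rw [hμ, hv]
    field_simp
    ring
  have hvμ : v ⬝ᵥ (P *ᵥ μ) = e := by
    rw [dotProduct_comm, dot_mulVec_symm hP, ← he]
  have hPvμ : (P *ᵥ v) ⬝ᵥ μ = e := (dot_mulVec_symm hP v μ).trans hvμ
  have h3 : dAᵀ *ᵥ g + b • c = -(T *ᵥ (P *ᵥ μ)) + (t / π - π * e) • μ + v := by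
    simp only [dA, c, b, g, transpose_add, transpose_smul, hT, vecMulVec_transpose',
      add_mulVec, smul_mulVec, vecMulVec_mulVec', mulVec_neg, smul_neg, neg_dotProduct,
      dotProduct_neg, smul_add, smul_smul, hvμ]
    set a := μ ⬝ᵥ (P *ᵥ μ) with ha
    ext i
    simp only [Pi.add_apply, Pi.neg_apply, Pi.smul_apply, smul_eq_mul]
    field_simp
    ring
  rw [h1, h2, h3, h4]
  -- expand the trace
  have hQ : trace ((P * T) * (π • vecMulVec (P *ᵥ v) μ)) = π * (((P * T) *ᵥ (P *ᵥ v)) ⬝ᵥ μ) := by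
    rw [mul_smul_comm, trace_smul, mul_vecMulVec', trace_vecMulVec']
    simp
  have hq : ((P * T) *ᵥ (P *ᵥ v)) ⬝ᵥ μ = (P *ᵥ v) ⬝ᵥ (T *ᵥ (P *ᵥ μ)) := by
    rw [← mulVec_mulVec, dot_mulVec_symm hP, dot_mulVec_symm hT]
  have hQ2 : trace ((π • vecMulVec (P *ᵥ v) μ) * (π • vecMulVec (P *ᵥ v) μ))
      = π ^ 2 * ((P *ᵥ v) ⬝ᵥ μ) ^ 2 := by
    rw [smul_mul_smul_comm, trace_smul, vecMulVec_mul', vecMulVec_transpose',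
      vecMulVec_mulVec', trace_vecMulVec']
    simp [dotProduct_smul]
    ring
  have hexp : trace ((P * T + π • vecMulVec (P *ᵥ v) μ) * (P * T + π • vecMulVec (P *ᵥ v) μ))
      = trace ((P * T) * (P * T)) + 2 * π * ((P *ᵥ v) ⬝ᵥ (T *ᵥ (P *ᵥ μ)))
        + π ^ 2 * ((P *ᵥ v) ⬝ᵥ μ) ^ 2 := by
    rw [mul_add, add_mul, add_mul, trace_add, trace_add, trace_add,
      trace_mul_comm (π • vecMulVec (P *ᵥ v) μ) (P * T), hQ, hQ2, hq]
    ring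
  rw [hexp]
  have hr : (P *ᵥ v) ⬝ᵥ v = v ⬝ᵥ (P *ᵥ v) := dot_mulVec_symm hP v v
  have hq' : (T *ᵥ (P *ᵥ μ)) ⬝ᵥ (P *ᵥ v) = (P *ᵥ v) ⬝ᵥ (T *ᵥ (P *ᵥ μ)) := dotProduct_comm _ _
  simp only [dotProduct_add, add_dotProduct, dotProduct_neg, neg_dotProduct, dotProduct_smul,
    smul_dotProduct, smul_eq_mul, hPvμ, hr, hq', hvμ, ← he]
  set τ := trace ((P * T) * (P * T)) with hτ
  set q := (P *ᵥ v) ⬝ᵥ (T *ᵥ (P *ᵥ μ)) with hqq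
  set r := v ⬝ᵥ (P *ᵥ v) with hrr
  field_simp
  ring

end Key

section Blocks
variable {n K : ℕ}

variable {n K : ℕ}

/-- Kn×K matrix with k-th diagonal block the column `f k`. -/
noncomputable def colBlocks (f : Fin K → Fin n → ℝ) : Matrix (Fin n × Fin K) (Fin K) ℝ :=
  fun p l => if p.2 = l then f p.2 p.1 else 0

lemma blockDiagonal_mul_colBlocks (M : Fin K → Matrix (Fin n) (Fin n) ℝ) (f : Fin K → Fin n → ℝ) :
    blockDiagonal M * colBlocks f = colBlocks (fun k => M k *ᵥ f k) := by
  ext ⟨i, k⟩ l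
  simp only [mul_apply, colBlocks, blockDiagonal_apply, Fintype.sum_prod_type, mulVec, dotProduct]
  rcases eq_or_ne k l with rfl | h
  · simp [Finset.sum_comm (γ := Fin K)]
  · simp [h]

lemma colBlocks_mul_diagonal (f : Fin K → Fin n → ℝ) (d : Fin K → ℝ) :
    colBlocks f * diagonal d = colBlocks (fun k => d k • f k) := by
  ext ⟨i, k⟩ l
  simp only [mul_apply, colBlocks, diagonal_apply]
  rcases eq_or_ne k l with rfl | h
  · simp [mul_comm]
  · simp [h]

lemma colBlocks_mul_transpose (f g : Fin K → Fin n → ℝ) :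
    colBlocks f * (colBlocks g)ᵀ = blockDiagonal (fun k => vecMulVec (f k) (g k)) := by
  ext ⟨i, k⟩ ⟨j, l⟩
  simp only [mul_apply, colBlocks, transpose_apply, blockDiagonal_apply, vecMulVec_apply]
  rcases eq_or_ne k l with rfl | h
  · simp
  · simp [h, Ne.symm]

lemma transpose_colBlocks_mul (f g : Fin K → Fin n → ℝ) :
    (colBlocks f)ᵀ * colBlocks g = diagonal (fun k => f k ⬝ᵥ g k) := by
  ext k l
  simp only [mul_apply, colBlocks, transpose_apply, diagonal_apply, dotProduct,
    Fintype.sum_prod_type]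
  rcases eq_or_ne k l with rfl | h
  · simp
  · simp [h]
    intro hlk; exact absurd hlk.symm h

lemma transpose_colBlocks_mul_blockDiagonal (f : Fin K → Fin n → ℝ)
    (M : Fin K → Matrix (Fin n) (Fin n) ℝ) :
    (colBlocks f)ᵀ * blockDiagonal M = (colBlocks (fun k => (M k)ᵀ *ᵥ f k))ᵀ := by
  have := congrArg transpose (blockDiagonal_mul_colBlocks (fun k => (M k)ᵀ) f)
  simpa [transpose_mul, blockDiagonal_transpose] using this

lemma diagonal_mul_transpose_colBlocks (d : Fin K → ℝ) (f : Fin K → Fin n → ℝ) :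
    diagonal d * (colBlocks f)ᵀ = (colBlocks (fun k => d k • f k))ᵀ := by
  have := congrArg transpose (colBlocks_mul_diagonal f d)
  simpa [transpose_mul, diagonal_transpose] using this

lemma colBlocks_add (f g : Fin K → Fin n → ℝ) :
    colBlocks (fun k => f k + g k) = colBlocks f + colBlocks g := by
  ext ⟨i, k⟩ l
  by_cases h : k = l <;> simp [colBlocks, h]

lemma colBlocks_congr (f g : Fin K → Fin n → ℝ) (h : ∀ k, f k = g k) :
    colBlocks f = colBlocks g := by
  ext ⟨i, k⟩ l; simp [colBlocks, h]

lemma colBlocks_zero : colBlocks (fun _ : Fin K => (0 : Fin n → ℝ)) = 0 := by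
  ext ⟨i, k⟩ l; simp [colBlocks]

end Blocks
end Helpers


/-- The differential metric:
`(1/2) Tr((S⁻¹ dS)²) = Σₖ [ (1/2)(tₖ/πₖ)² + πₖ vₖᵀΣₖ⁻¹vₖ + (1/2) Tr((Σₖ⁻¹Tₖ)²) ]`. -/
theorem gmm_differential_metric {n K : ℕ}
    (π : Fin K → ℝ) (μ : Fin K → Fin n → ℝ) (Sig : Fin K → Matrix (Fin n) (Fin n) ℝ)
    (t : Fin K → ℝ) (v : Fin K → Fin n → ℝ) (T : Fin K → Matrix (Fin n) (Fin n) ℝ)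
    (hπ : ∀ k, 0 < π k) (hSig : ∀ k, (Sig k).PosDef) (hT : ∀ k, (T k).IsSymm) :
    (1 / 2) * Matrix.trace (((gmmS π μ Sig)⁻¹ * gmmdS π μ t v T) ^ 2) =
      ∑ k : Fin K,
        ((1 / 2) * (t k / π k) ^ 2 + π k * (v k ⬝ᵥ ((Sig k)⁻¹ *ᵥ v k))
          + (1 / 2) * Matrix.trace (((Sig k)⁻¹ * T k) ^ 2)) := by
  set P : Fin K → Matrix (Fin n) (Fin n) ℝ := fun k => (Sig k)⁻¹ with hPdef
  have hπ0 : ∀ k, π k ≠ 0 := fun k => (hπ k).ne'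
  have hdet : ∀ k, IsUnit (Sig k).det := fun k => isUnit_iff_ne_zero.2 (hSig k).det_pos.ne'
  have hP1 : ∀ k, Sig k * P k = 1 := fun k => mul_nonsing_inv _ (hdet k)
  have hP2 : ∀ k, P k * Sig k = 1 := fun k => nonsing_inv_mul _ (hdet k)
  have hSt : ∀ k, (Sig k)ᵀ = Sig k := fun k => (hSig k).isHermitian.eq
  have hPt : ∀ k, (P k)ᵀ = P k := fun k => by
    rw [hPdef, transpose_nonsing_inv, hSt]
  have hTt : ∀ k, (T k)ᵀ = T k := fun k => (hT k)
  set g : Fin K → Fin n → ℝ := fun k => -(P k *ᵥ μ k) with hgdef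
  set bf : Fin K → ℝ := fun k => (π k)⁻¹ + μ k ⬝ᵥ (P k *ᵥ μ k) with hbdef
  set c : Fin K → Fin n → ℝ := fun k => t k • μ k + π k • v k with hcdef
  set dA : Fin K → Matrix (Fin n) (Fin n) ℝ := fun k =>
    T k + t k • vecMulVec (μ k) (μ k) + π k • vecMulVec (v k) (μ k)
      + π k • vecMulVec (μ k) (v k) with hdAdef
  set Sinv : Matrix (Fin n × Fin K ⊕ Fin K) (Fin n × Fin K ⊕ Fin K) ℝ :=
    fromBlocks (blockDiagonal P) (colBlocks g) (colBlocks g)ᵀ (diagonal bf) with hSinvdef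
  have hgmmX : gmmX π μ = colBlocks (fun k => π k • μ k) := by
    ext ⟨i, k⟩ l; simp [gmmX, colBlocks]
  have hgmmdX : gmmdX π μ t v = colBlocks c := by
    ext ⟨i, k⟩ l; simp [gmmdX, colBlocks, hcdef]
  -- Step 1 : S * Sinv = 1
  have hright : gmmS π μ Sig * Sinv = 1 := by
    rw [gmmS, gmmA, gmmB, hgmmX, hSinvdef, fromBlocks_multiply]
    have hTL : blockDiagonal (fun k => Sig k + π k • vecMulVec (μ k) (μ k)) * blockDiagonal P
        + colBlocks (fun k => π k • μ k) * (colBlocks g)ᵀ = 1 := by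
      rw [← blockDiagonal_mul, colBlocks_mul_transpose, ← blockDiagonal_add,
        ← blockDiagonal_one]
      refine congrArg blockDiagonal (funext fun k => ?_)
      simp only [Pi.add_apply, Pi.one_apply]
      rw [add_mul, smul_mul_assoc, vecMulVec_mul', hPt, hP1]
      simp only [hgdef]
      rw [_root_.vecMulVec_neg, _root_.smul_vecMulVec]
      abel
    have hTR : blockDiagonal (fun k => Sig k + π k • vecMulVec (μ k) (μ k)) * colBlocks g
        + colBlocks (fun k => π k • μ k) * diagonal bf = 0 := by
      rw [blockDiagonal_mul_colBlocks, colBlocks_mul_diagonal, ← colBlocks_add, ← colBlocks_zero]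
      apply colBlocks_congr
      intro k
      have hSPμ : Sig k *ᵥ (P k *ᵥ μ k) = μ k := by
        rw [mulVec_mulVec, hP1, one_mulVec]
      rw [add_mulVec, smul_mulVec, vecMulVec_mulVec', mulVec_neg, hSPμ]
      simp only [hgdef, hbdef]
      ext i
      simp only [Pi.add_apply, Pi.neg_apply, Pi.smul_apply, smul_eq_mul, Pi.zero_apply,
        dotProduct_neg, neg_mul, mul_neg]
      field_simp [hπ0 k]
      ring
    have hBL : (colBlocks (fun k => π k • μ k))ᵀ * blockDiagonal P
        + diagonal π * (colBlocks g)ᵀ = 0 := by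
      rw [transpose_colBlocks_mul_blockDiagonal, diagonal_mul_transpose_colBlocks,
        ← transpose_add, ← colBlocks_add]
      have : (fun k => (P k)ᵀ *ᵥ (π k • μ k) + π k • g k) = fun _ => 0 := by
        funext k
        rw [hPt, mulVec_smul, hgdef]
        simp
      rw [this, colBlocks_zero, transpose_zero]
    have hBR : (colBlocks (fun k => π k • μ k))ᵀ * colBlocks g + diagonal π * diagonal bf
        = 1 := by
      rw [transpose_colBlocks_mul, diagonal_mul_diagonal, diagonal_add, ← diagonal_one]
      refine congrArg diagonal (funext fun k => ?_)
      simp only [Pi.add_apply, Pi.one_apply, hgdef, hbdef, smul_dotProduct, dotProduct_neg,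
        smul_eq_mul]
      field_simp [hπ0 k]
      ring
    rw [hTL, hTR, hBL, hBR, fromBlocks_one]
  have hinv : (gmmS π μ Sig)⁻¹ = Sinv := inv_eq_right_inv hright
  have hdS : gmmdS π μ t v T
      = fromBlocks (blockDiagonal dA) (colBlocks c) (colBlocks c)ᵀ (diagonal t) := by
    rw [gmmdS, gmmdA, hgmmdX, ← hdAdef]
  have hM : Sinv * gmmdS π μ t v T
      = fromBlocks (blockDiagonal fun k => P k * dA k + vecMulVec (g k) (c k))
          (colBlocks fun k => P k *ᵥ c k + t k • g k)
          (colBlocks fun k => (dA k)ᵀ *ᵥ g k + bf k • c k)ᵀ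
          (diagonal fun k => g k ⬝ᵥ c k + bf k * t k) := by
    have e11 : blockDiagonal P * blockDiagonal dA + colBlocks g * (colBlocks c)ᵀ
        = blockDiagonal fun k => P k * dA k + vecMulVec (g k) (c k) := by
      rw [← blockDiagonal_mul, colBlocks_mul_transpose, ← blockDiagonal_add]
      exact congrArg _ (funext fun k => rfl)
    have e12 : blockDiagonal P * colBlocks c + colBlocks g * diagonal t
        = colBlocks fun k => P k *ᵥ c k + t k • g k := by
      rw [blockDiagonal_mul_colBlocks, colBlocks_mul_diagonal, ← colBlocks_add]
    have e21 : (colBlocks g)ᵀ * blockDiagonal dA + diagonal bf * (colBlocks c)ᵀ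
        = (colBlocks fun k => (dA k)ᵀ *ᵥ g k + bf k • c k)ᵀ := by
      rw [transpose_colBlocks_mul_blockDiagonal, diagonal_mul_transpose_colBlocks,
        ← transpose_add, ← colBlocks_add]
    have e22 : (colBlocks g)ᵀ * colBlocks c + diagonal bf * diagonal t
        = diagonal fun k => g k ⬝ᵥ c k + bf k * t k := by
      rw [transpose_colBlocks_mul, diagonal_mul_diagonal, diagonal_add]
    rw [hdS, hSinvdef, fromBlocks_multiply, e11, e12, e21, e22]
  rw [pow_two, hinv, hM, fromBlocks_multiply, trace_fromBlocks', trace_add, trace_add]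
  rw [← blockDiagonal_mul, trace_blockDiagonal]
  rw [colBlocks_mul_transpose, trace_blockDiagonal]
  rw [transpose_colBlocks_mul, trace_diagonal]
  rw [diagonal_mul_diagonal, trace_diagonal]
  have htr : ∀ k : Fin K, trace (vecMulVec (P k *ᵥ c k + t k • g k)
      ((dA k)ᵀ *ᵥ g k + bf k • c k))
      = (P k *ᵥ c k + t k • g k) ⬝ᵥ ((dA k)ᵀ *ᵥ g k + bf k • c k) :=
    fun k => trace_vecMulVec' _ _
  simp only [htr]
  rw [← Finset.sum_add_distrib, ← Finset.sum_add_distrib, ← Finset.sum_add_distrib,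
    Finset.mul_sum]
  refine Finset.sum_congr rfl fun k _ => ?_
  have key := key_component (P k) (T k) (μ k) (v k) (π k) (t k) (hπ0 k) (hPt k) (hTt k)
  simp only [hdAdef, hgdef, hbdef, hcdef, hPdef] at key ⊢
  rw [pow_two ((Sig k)⁻¹ * T k)]
  linear_combination key
end

section
/- At any parameter point (π, μ, Σ) with π_k > 0, μ_k ∈ ℝⁿ, and Σ_k real symmetric positive definite n×n matrices, the Fréchet derivative of the map f : (π, μ, Σ) ↦ S(π, μ, Σ) is injective on tangent directions (t, v, T) with t_k ∈ ℝ, v_k ∈ ℝⁿ, and T_k real symmetric n×n matrices: if the directional derivative dS = [[blockdiag(T_k + t_k μ_kμ_kᵀ + π_k v_kμ_kᵀ + π_k μ_kv_kᵀ), dX],[dXᵀ, diag(t_k)]] (with dX the Kn×K block-diagonal matrix with k-th block t_k μ_k + π_k v_k) is the zero matrix, then t_k = 0, v_k = 0, and T_k = 0 for all k. -/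
open Matrix

/-- Injectivity of the differential of the embedding: at any parameter point with
`πₖ > 0` and `Σₖ` symmetric positive definite, if the directional derivative `dS`
in a tangent direction `(t, v, T)` (with each `Tₖ` symmetric) vanishes, then the
direction is zero. -/
theorem gmm_differential_injective {n K : ℕ}
    (π : Fin K → ℝ) (μ : Fin K → Fin n → ℝ) (Sig : Fin K → Matrix (Fin n) (Fin n) ℝ)
    (t : Fin K → ℝ) (v : Fin K → Fin n → ℝ) (T : Fin K → Matrix (Fin n) (Fin n) ℝ)
    (hπ : ∀ k, 0 < π k) (hSig : ∀ k, (Sig k).PosDef) (hT : ∀ k, (T k).IsSymm)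
    (h : gmmdS π μ t v T = 0) :
    t = 0 ∧ v = 0 ∧ T = 0 := by
  have ht : ∀ k, t k = 0 := by
    intro k
    have := congrFun (congrFun h (Sum.inr k)) (Sum.inr k)
    simpa [gmmdS, Matrix.diagonal] using this
  have hv : ∀ k i, v k i = 0 := by
    intro k i
    have := congrFun (congrFun h (Sum.inl (i, k))) (Sum.inr k)
    simp [gmmdS, gmmdX, ht k] at this
    rcases this with h' | h'
    · exact absurd h' (hπ k).ne'
    · exact h'
  have hTk : ∀ k i j, T k i j = 0 := by
    intro k i j
    have := congrFun (congrFun h (Sum.inl (i, k))) (Sum.inl (j, k))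
    simpa [gmmdS, gmmdA, Matrix.blockDiagonal, ht k, hv, Matrix.vecMulVec] using this
  exact ⟨funext ht, funext fun k => funext (hv k), funext fun k => by ext i j; exact hTk k i j⟩
end

section
/- Let K ≥ 1, fix μ₀ ∈ ℝⁿ and set π_k = 1/K for all k. Let B_1, …, B_K be constant real n×n matrices and let Σ_k : ℝ → (real symmetric positive definite n×n matrices) be differentiable curves satisfying Σ_k'(t) = Σ_k(t)·B_k for all t. Define S(t) = S(π, μ, Σ(t)) with all means equal to μ₀. Then for every t, S(t) is invertible, S(t)⁻¹·S'(t) = [[blockdiag(B_1, …, B_K), 0],[M, 0]], where M is the K×Kn block-diagonal matrix with k-th diagonal block the row vector −μ₀ᵀB_k; in particular, S(t)⁻¹·S'(t) is constant in t. -/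
open Matrix

lemma gmm_mul_aux {n K : ℕ} (π : Fin K → ℝ) (μ0 : Fin n → ℝ)
    (Bm Sg : Fin K → Matrix (Fin n) (Fin n) ℝ) :
    gmmS π (fun _ => μ0) Sg *
      (Matrix.fromBlocks (Matrix.blockDiagonal Bm) 0
        (fun (l : Fin K) (p : Fin n × Fin K) =>
          if p.2 = l then -((μ0 ᵥ* Bm l) p.1) else 0) 0 :
        Matrix (Fin n × Fin K ⊕ Fin K) (Fin n × Fin K ⊕ Fin K) ℝ)
    = Matrix.fromBlocks (Matrix.blockDiagonal fun k => Sg k * Bm k) 0 0 0 := by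
  ext i j
  rcases i with p | k <;> rcases j with q | l <;>
    simp [gmmS, gmmA, gmmX, gmmB, Matrix.mul_apply, Fintype.sum_sum_type,
      Fintype.sum_prod_type, Matrix.blockDiagonal_apply, Matrix.diagonal_apply,
      Matrix.vecMulVec_apply, Matrix.vecMul, dotProduct, Matrix.add_apply,
      mul_ite, ite_mul, Finset.sum_ite_eq, Finset.sum_ite_eq',
      Finset.mul_sum, Finset.sum_mul, add_mul, mul_add, Matrix.fromBlocks]
  · by_cases h : p.2 = q.2 <;> simp [h, Finset.sum_add_distrib, mul_comm, mul_left_comm]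
  · rcases eq_or_ne k q.2 with h | h
    · simp [h, mul_comm, mul_left_comm]
    · simp [h, Ne.symm h]

lemma gmm_isUnit {n K : ℕ} (hK : 1 ≤ K) (μ0 : Fin n → ℝ)
    (Sg : Fin K → Matrix (Fin n) (Fin n) ℝ) (hSg : ∀ k, (Sg k).PosDef) :
    IsUnit (gmmS (fun _ => (K:ℝ)⁻¹) (fun _ => μ0) Sg) := by
  have hKne : (K:ℝ) ≠ 0 := Nat.cast_ne_zero.mpr (by omega)
  set π : Fin K → ℝ := fun _ => (K:ℝ)⁻¹ with hπ
  haveI : Invertible (gmmB π) :=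
    ⟨Matrix.diagonal (fun _ => (K:ℝ)),
     by ext i j; simp [gmmB, Matrix.diagonal_mul_diagonal, hπ, Matrix.diagonal_apply,
          inv_mul_cancel₀ hKne, mul_inv_cancel₀ hKne, Matrix.one_apply],
     by ext i j; simp [gmmB, Matrix.diagonal_mul_diagonal, hπ, Matrix.diagonal_apply,
          inv_mul_cancel₀ hKne, mul_inv_cancel₀ hKne, Matrix.one_apply]⟩
  rw [Matrix.isUnit_iff_isUnit_det, gmmS, Matrix.det_fromBlocks₂₂]
  have h1 : ⅟(gmmB π) = Matrix.diagonal (fun _ : Fin K => (K:ℝ)) :=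
    invOf_eq_right_inv (by
      ext i j; simp [gmmB, Matrix.diagonal_mul_diagonal, hπ, Matrix.diagonal_apply,
        inv_mul_cancel₀ hKne, Matrix.one_apply])
  have h2 : gmmA π (fun _ => μ0) Sg -
      gmmX π (fun _ => μ0) * ⅟(gmmB π) * (gmmX π (fun _ => μ0))ᵀ
      = Matrix.blockDiagonal Sg := by
    rw [h1]; ext p q
    simp only [Matrix.sub_apply, gmmA, gmmX, Matrix.mul_apply,
      Matrix.blockDiagonal_apply, Matrix.diagonal_apply, Matrix.transpose_apply,
      Matrix.add_apply, Matrix.smul_apply, Matrix.vecMulVec_apply, smul_eq_mul,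
      mul_ite, ite_mul, zero_mul, mul_zero, Finset.sum_ite_eq, Finset.sum_ite_eq',
      Finset.mem_univ, if_true]
    by_cases h : p.2 = q.2
    · simp only [h, if_true]
      have hq : π q.2 = (K:ℝ)⁻¹ := rfl
      rw [hq]; field_simp; ring
    · simp [h]
  rw [h2, Matrix.det_blockDiagonal]
  apply IsUnit.mul
  · simp only [gmmB, Matrix.det_diagonal, hπ, isUnit_iff_ne_zero]
    positivity
  · rw [isUnit_iff_ne_zero]
    exact ne_of_gt (Finset.prod_pos fun k _ => (hSg k).det_pos)

lemma gmm_hasDeriv {n K : ℕ} (μ0 : Fin n → ℝ) (Bm : Fin K → Matrix (Fin n) (Fin n) ℝ)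
    (Sig : ℝ → Fin K → Matrix (Fin n) (Fin n) ℝ)
    (hderiv : ∀ s k i j, HasDerivAt (fun u => Sig u k i j) ((Sig s k * Bm k) i j) s)
    (s : ℝ) (i j : Fin n × Fin K ⊕ Fin K) :
    HasDerivAt (fun u => gmmS (fun _ => (K:ℝ)⁻¹) (fun _ => μ0) (Sig u) i j)
      ((Matrix.fromBlocks (Matrix.blockDiagonal fun k => Sig s k * Bm k)
        (0 : Matrix (Fin n × Fin K) (Fin K) ℝ) (0 : Matrix (Fin K) (Fin n × Fin K) ℝ) 0) i j) s := by
  rcases i with p | k <;> rcases j with q | l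
  · by_cases h : p.2 = q.2
    · have hf : (fun u => gmmS (fun _ => (K:ℝ)⁻¹) (fun _ => μ0) (Sig u) (Sum.inl p) (Sum.inl q))
          = fun u => Sig u p.2 p.1 q.1 + (K:ℝ)⁻¹ * (μ0 p.1 * μ0 q.1) := by
        funext u
        simp [gmmS, gmmA, Matrix.blockDiagonal_apply, h, Matrix.vecMulVec_apply, mul_assoc]
      have hv : (Matrix.fromBlocks (Matrix.blockDiagonal fun k => Sig s k * Bm k)
          (0 : Matrix (Fin n × Fin K) (Fin K) ℝ) (0 : Matrix (Fin K) (Fin n × Fin K) ℝ) 0) (Sum.inl p) (Sum.inl q)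
          = (Sig s p.2 * Bm p.2) p.1 q.1 := by
        simp only [Matrix.fromBlocks_apply₁₁, Matrix.blockDiagonal_apply, if_pos h]
      rw [hf, hv]
      exact (hderiv s p.2 p.1 q.1).add_const _
    · have hf : (fun u => gmmS (fun _ => (K:ℝ)⁻¹) (fun _ => μ0) (Sig u) (Sum.inl p) (Sum.inl q))
          = fun _ => (0:ℝ) := by
        funext u
        simp [gmmS, gmmA, Matrix.blockDiagonal_apply, h]
      have hv : (Matrix.fromBlocks (Matrix.blockDiagonal fun k => Sig s k * Bm k)
          (0 : Matrix (Fin n × Fin K) (Fin K) ℝ) (0 : Matrix (Fin K) (Fin n × Fin K) ℝ) 0) (Sum.inl p) (Sum.inl q) = 0 := by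
        simp only [Matrix.fromBlocks_apply₁₁, Matrix.blockDiagonal_apply, if_neg h]
      rw [hf, hv]
      exact hasDerivAt_const _ _
  · simpa [gmmS] using hasDerivAt_const s (gmmS (fun _ => (K:ℝ)⁻¹) (fun _ : Fin K => μ0) (Sig s) (Sum.inl p) (Sum.inr l))
  · simpa [gmmS] using hasDerivAt_const s (gmmS (fun _ => (K:ℝ)⁻¹) (fun _ : Fin K => μ0) (Sig s) (Sum.inr k) (Sum.inl q))
  · simpa [gmmS] using hasDerivAt_const s (gmmS (fun _ => (K:ℝ)⁻¹) (fun _ : Fin K => μ0) (Sig s) (Sum.inr k) (Sum.inr l))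

/-- With fixed means `μ₀`, uniform mixing coefficients `πₖ = 1/K`, and curves of
covariances satisfying `Σₖ'(s) = Σₖ(s) Bₖ`, the matrix `S(s)` is invertible and
`S(s)⁻¹ S'(s) = [[blockdiag (B₁, …, B_K), 0], [M, 0]]` where the k-th diagonal
block of `M` is the row vector `−μ₀ᵀ Bₖ`; in particular `S(s)⁻¹ S'(s)` is
constant in `s`. -/
theorem gmm_geodesic_const {n K : ℕ} (hK : 1 ≤ K) (μ0 : Fin n → ℝ)
    (Bm : Fin K → Matrix (Fin n) (Fin n) ℝ)
    (Sig : ℝ → Fin K → Matrix (Fin n) (Fin n) ℝ)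
    (hSig : ∀ s k, (Sig s k).PosDef)
    (hderiv : ∀ s k i j, HasDerivAt (fun u => Sig u k i j) ((Sig s k * Bm k) i j) s)
    (DS : ℝ → Matrix (Fin n × Fin K ⊕ Fin K) (Fin n × Fin K ⊕ Fin K) ℝ)
    (hDS : ∀ s i j,
      HasDerivAt (fun u => gmmS (fun _ => (K : ℝ)⁻¹) (fun _ => μ0) (Sig u) i j)
        (DS s i j) s) :
    (∀ s : ℝ,
      IsUnit (gmmS (fun _ => (K : ℝ)⁻¹) (fun _ => μ0) (Sig s)) ∧
      (gmmS (fun _ => (K : ℝ)⁻¹) (fun _ => μ0) (Sig s))⁻¹ * DS s =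
        Matrix.fromBlocks (Matrix.blockDiagonal Bm) 0
          (fun (l : Fin K) (p : Fin n × Fin K) =>
            if p.2 = l then -((μ0 ᵥ* Bm l) p.1) else 0)
          0) ∧
    ∀ s u : ℝ,
      (gmmS (fun _ => (K : ℝ)⁻¹) (fun _ => μ0) (Sig s))⁻¹ * DS s =
        (gmmS (fun _ => (K : ℝ)⁻¹) (fun _ => μ0) (Sig u))⁻¹ * DS u := by
  have hDSval : ∀ s, DS s = Matrix.fromBlocks
      (Matrix.blockDiagonal fun k => Sig s k * Bm k)
      (0 : Matrix (Fin n × Fin K) (Fin K) ℝ) (0 : Matrix (Fin K) (Fin n × Fin K) ℝ) 0 := by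
    intro s; ext i j
    exact (hDS s i j).unique (gmm_hasDeriv μ0 Bm Sig hderiv s i j)
  have hC : ∀ s, (gmmS (fun _ => (K : ℝ)⁻¹) (fun _ => μ0) (Sig s))⁻¹ * DS s =
      Matrix.fromBlocks (Matrix.blockDiagonal Bm) 0
        (fun (l : Fin K) (p : Fin n × Fin K) =>
          if p.2 = l then -((μ0 ᵥ* Bm l) p.1) else 0) 0 := by
    intro s
    have hu := gmm_isUnit hK μ0 (Sig s) (hSig s)
    haveI := Matrix.invertibleOfIsUnitDet _ ((Matrix.isUnit_iff_isUnit_det _).mp hu)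
    rw [hDSval s, ← gmm_mul_aux (fun _ => (K:ℝ)⁻¹) μ0 Bm (Sig s),
      Matrix.inv_mul_cancel_left_of_invertible]
  exact ⟨fun s => ⟨gmm_isUnit hK μ0 (Sig s) (hSig s), hC s⟩,
    fun s u => (hC s).trans (hC u).symm⟩
end
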